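/- Let Q ∈ ℂ^{M×M} be a Hermitian matrix and H̄ ∈ ℂ^{M×J}. Suppose (i) the block matrix [[Q, H̄],[H̄^H, I_J]] is positive semidefinite, and (ii) for each m = 1,...,M-1 the sum over n = 1,...,M-m of Q_{n,n+m} equals 0, while the diagonal sum of Q equals 1. Then for every real f ∈ [-1/2, 1/2], ‖H̄^H a(f)‖₂ ≤ 1, where a(f) ∈ ℂ^M has entries a(f)_n = exp(-2πi(n-1)f). -/

import Mathlib

open Matrix Finset
open scoped ComplexOrder

/-- Steering vector: `a(f)_n = exp(-2πi n f)` for `n = 0,…,M-1`. -/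
noncomputable def steer (M : ℕ) (f : ℝ) : Fin M → ℂ :=
  fun n => Complex.exp (-2 * Real.pi * Complex.I * ((n : ℕ) : ℂ) * (f : ℂ))

/-- Sum of the `m`-th superdiagonal of `Q`. -/
noncomputable def superdiagSum {M : ℕ} (Q : Matrix (Fin M) (Fin M) ℂ) (m : ℕ) : ℂ :=
  ∑ i : Fin M, ∑ j : Fin M, if (j : ℕ) = (i : ℕ) + m then Q i j else 0

/-- Pointwise grouping identity. -/
lemma pointwise_group {M : ℕ} (Q : Matrix (Fin M) (Fin M) ℂ) (w : ℂ)
    (hw : (starRingEnd ℂ) w * w = 1) (i j : Fin M) :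
    (starRingEnd ℂ) w ^ (i : ℕ) * w ^ (j : ℕ) * Q i j
      = ∑ m ∈ range M,
          ((if (j : ℕ) = (i : ℕ) + m then Q i j else 0) * w ^ m
            + (if (i : ℕ) = (j : ℕ) + m ∧ m ≠ 0 then Q i j else 0) * (starRingEnd ℂ) w ^ m) := by
  set cw := (starRingEnd ℂ) w with hcw
  rcases le_or_gt (i : ℕ) (j : ℕ) with h | h
  · set m0 := (j : ℕ) - (i : ℕ) with hm0
    have hj : (j : ℕ) = (i : ℕ) + m0 := by omega
    have hmem : m0 ∈ range M := by
      simp only [mem_range]; omega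
    have hsum : ∀ m ∈ range M,
        ((if (j : ℕ) = (i : ℕ) + m then Q i j else 0) * w ^ m
          + (if (i : ℕ) = (j : ℕ) + m ∧ m ≠ 0 then Q i j else 0) * cw ^ m)
        = if m = m0 then Q i j * w ^ m0 else 0 := by
      intro m _
      by_cases hmm : m = m0
      · subst hmm
        rw [if_pos hj, if_neg (by omega), if_pos rfl]
        ring
      · rw [if_neg (by omega), if_neg (by omega), if_neg hmm]
        ring
    rw [Finset.sum_congr rfl hsum, Finset.sum_ite_eq' (range M) m0 (fun _ => Q i j * w ^ m0),
      if_pos hmem, hj, pow_add, ← mul_assoc, ← mul_pow, hw, one_pow]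
    ring
  · set m0 := (i : ℕ) - (j : ℕ) with hm0
    have hi : (i : ℕ) = (j : ℕ) + m0 := by omega
    have hm0ne : m0 ≠ 0 := by omega
    have hmem : m0 ∈ range M := by
      simp only [mem_range]; omega
    have hsum : ∀ m ∈ range M,
        ((if (j : ℕ) = (i : ℕ) + m then Q i j else 0) * w ^ m
          + (if (i : ℕ) = (j : ℕ) + m ∧ m ≠ 0 then Q i j else 0) * cw ^ m)
        = if m = m0 then Q i j * cw ^ m0 else 0 := by
      intro m _
      by_cases hmm : m = m0
      · subst hmm
        rw [if_neg (by omega), if_pos ⟨hi, hm0ne⟩, if_pos rfl]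
        ring
      · rw [if_neg (by omega), if_neg (by omega), if_neg hmm]
        ring
    rw [Finset.sum_congr rfl hsum, Finset.sum_ite_eq' (range M) m0 (fun _ => Q i j * cw ^ m0),
      if_pos hmem, hi]
    have h1 : cw ^ (j : ℕ) * w ^ (j : ℕ) = 1 := by rw [← mul_pow, hw, one_pow]
    rw [pow_add]
    linear_combination (cw ^ m0 * Q i j) * h1

/-- Quadratic form of `Q` at the steering vector equals `1`. -/
lemma quadform_eq_one {M : ℕ} (hM : 0 < M) (Q : Matrix (Fin M) (Fin M) ℂ)
    (hQ : Q.IsHermitian) (hdiag : superdiagSum Q 0 = 1)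
    (hsuper : ∀ m : ℕ, 1 ≤ m → m ≤ M - 1 → superdiagSum Q m = 0) (f : ℝ) :
    star (steer M f) ⬝ᵥ Q.mulVec (steer M f) = 1 := by
  set w : ℂ := Complex.exp (-2 * Real.pi * Complex.I * (f : ℂ)) with hwdef
  have hv : ∀ n : Fin M, steer M f n = w ^ (n : ℕ) := by
    intro n
    rw [hwdef, ← Complex.exp_nat_mul]
    unfold steer
    congr 1
    ring
  have hw : (starRingEnd ℂ) w * w = 1 := by
    rw [hwdef, ← Complex.exp_conj, ← Complex.exp_add]
    have : (starRingEnd ℂ) (-2 * (Real.pi : ℂ) * Complex.I * (f : ℂ))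
        + (-2 * (Real.pi : ℂ) * Complex.I * (f : ℂ)) = 0 := by
      simp only [_root_.map_mul, map_neg, map_ofNat, Complex.conj_I, Complex.conj_ofReal]
      ring
    rw [this, Complex.exp_zero]
  have step1 : star (steer M f) ⬝ᵥ Q.mulVec (steer M f)
      = ∑ i : Fin M, ∑ j : Fin M,
          (starRingEnd ℂ) w ^ (i : ℕ) * w ^ (j : ℕ) * Q i j := by
    simp only [dotProduct, Matrix.mulVec, Pi.star_apply, Finset.mul_sum]
    refine Finset.sum_congr rfl fun i _ => Finset.sum_congr rfl fun j _ => ?_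
    rw [hv i, hv j]
    rw [Complex.star_def, map_pow]
    ring
  rw [step1]
  have step2 : ∑ i : Fin M, ∑ j : Fin M,
      (starRingEnd ℂ) w ^ (i : ℕ) * w ^ (j : ℕ) * Q i j
      = ∑ m ∈ range M,
          (superdiagSum Q m * w ^ m
            + (∑ i : Fin M, ∑ j : Fin M,
                if (i : ℕ) = (j : ℕ) + m ∧ m ≠ 0 then Q i j else 0) * (starRingEnd ℂ) w ^ m) :=
    calc ∑ i : Fin M, ∑ j : Fin M, (starRingEnd ℂ) w ^ (i : ℕ) * w ^ (j : ℕ) * Q i j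
        = ∑ i : Fin M, ∑ j : Fin M, ∑ m ∈ range M,
            ((if (j : ℕ) = (i : ℕ) + m then Q i j else 0) * w ^ m
              + (if (i : ℕ) = (j : ℕ) + m ∧ m ≠ 0 then Q i j else 0) * (starRingEnd ℂ) w ^ m) :=
          Finset.sum_congr rfl fun i _ => Finset.sum_congr rfl fun j _ =>
            pointwise_group Q w hw i j
      _ = ∑ i : Fin M, ∑ m ∈ range M, ∑ j : Fin M,
            ((if (j : ℕ) = (i : ℕ) + m then Q i j else 0) * w ^ m
              + (if (i : ℕ) = (j : ℕ) + m ∧ m ≠ 0 then Q i j else 0) * (starRingEnd ℂ) w ^ m) :=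
          Finset.sum_congr rfl fun i _ => Finset.sum_comm
      _ = ∑ m ∈ range M, ∑ i : Fin M, ∑ j : Fin M,
            ((if (j : ℕ) = (i : ℕ) + m then Q i j else 0) * w ^ m
              + (if (i : ℕ) = (j : ℕ) + m ∧ m ≠ 0 then Q i j else 0) * (starRingEnd ℂ) w ^ m) :=
          Finset.sum_comm
      _ = _ := by
          refine Finset.sum_congr rfl fun m _ => ?_
          simp only [Finset.sum_add_distrib, ← Finset.sum_mul, superdiagSum]
  rw [step2]
  have hterm : ∀ m ∈ range M,
      (superdiagSum Q m * w ^ m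
        + (∑ i : Fin M, ∑ j : Fin M,
            if (i : ℕ) = (j : ℕ) + m ∧ m ≠ 0 then Q i j else 0) * (starRingEnd ℂ) w ^ m)
      = if m = 0 then 1 else 0 := by
    intro m hm
    rcases Nat.eq_zero_or_pos m with h0 | h0
    · subst h0
      have h2 : (∑ i : Fin M, ∑ j : Fin M,
          if (i : ℕ) = (j : ℕ) + 0 ∧ (0 : ℕ) ≠ 0 then Q i j else 0) = 0 := by
        simp
      rw [h2, hdiag]
      simp
    · have hle : m ≤ M - 1 := by
        have := Finset.mem_range.mp hm; omega
      have hz : superdiagSum Q m = 0 := hsuper m h0 hle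
      have hconj : (starRingEnd ℂ) (superdiagSum Q m)
          = ∑ a : Fin M, ∑ b : Fin M, if (b : ℕ) = (a : ℕ) + m then Q b a else 0 := by
        rw [superdiagSum, _root_.map_sum]
        refine Finset.sum_congr rfl fun a _ => ?_
        rw [_root_.map_sum]
        refine Finset.sum_congr rfl fun b _ => ?_
        rw [apply_ite (starRingEnd ℂ), map_zero]
        congr 1
        rw [← hQ.apply a b]
        simp
      have h2 : (∑ i : Fin M, ∑ j : Fin M,
          if (i : ℕ) = (j : ℕ) + m ∧ m ≠ 0 then Q i j else 0)
          = (starRingEnd ℂ) (superdiagSum Q m) := by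
        rw [hconj, Finset.sum_comm]
        refine Finset.sum_congr rfl fun i _ => Finset.sum_congr rfl fun j _ => ?_
        exact if_congr (and_iff_left (by omega)) rfl rfl
      rw [h2, hz, map_zero, zero_mul, zero_mul, add_zero, if_neg (by omega)]
  rw [Finset.sum_congr rfl hterm, Finset.sum_ite_eq' (range M) 0 (fun _ => (1 : ℂ)),
    if_pos (Finset.mem_range.mpr hM)]

/-- Proposition 1 of the paper (forward direction). -/
theorem stmt3 {M J : ℕ} (hM : 0 < M) (Q : Matrix (Fin M) (Fin M) ℂ)
    (Hbar : Matrix (Fin M) (Fin J) ℂ) (hQ : Q.IsHermitian)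
    (hblock : (Matrix.fromBlocks Q Hbar Hbarᴴ (1 : Matrix (Fin J) (Fin J) ℂ)).PosSemidef)
    (hdiag : superdiagSum Q 0 = 1)
    (hsuper : ∀ m : ℕ, 1 ≤ m → m ≤ M - 1 → superdiagSum Q m = 0) :
    ∀ f ∈ Set.Icc (-(1:ℝ)/2) (1/2),
      Real.sqrt (∑ j : Fin J, ‖Hbarᴴ.mulVec (steer M f) j‖ ^ 2) ≤ 1 := by
  intro f _
  set v := steer M f with hv
  set u := Hbarᴴ.mulVec v with hu
  -- block quadratic form with test vector (v, -u)
  have hz := hblock.dotProduct_mulVec_nonneg (Sum.elim v (-u))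
  have hstar : star (Sum.elim v (-u)) = Sum.elim (star v) (-(star u)) := by
    funext x; cases x <;> simp
  rw [Matrix.fromBlocks_mulVec, hstar] at hz
  have hcomp1 : (Q *ᵥ Sum.elim v (-u) ∘ Sum.inl + Hbar *ᵥ Sum.elim v (-u) ∘ Sum.inr)
      = Q *ᵥ v + Hbar *ᵥ (-u) := by
    congr 1
  have hcomp2 : (Hbarᴴ *ᵥ Sum.elim v (-u) ∘ Sum.inl
        + (1 : Matrix (Fin J) (Fin J) ℂ) *ᵥ Sum.elim v (-u) ∘ Sum.inr)
      = u + (-u) := by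
    simp [hu, Matrix.one_mulVec]
  rw [hcomp1, hcomp2, add_neg_cancel, sumElim_dotProduct_sumElim,
    dotProduct_zero, add_zero, dotProduct_add, Matrix.mulVec_neg,
    dotProduct_neg] at hz
  have hcross : star v ⬝ᵥ Hbar *ᵥ u = star u ⬝ᵥ u := by
    rw [Matrix.dotProduct_mulVec]
    congr 1
    rw [hu, Matrix.star_mulVec, Matrix.conjTranspose_conjTranspose]
  rw [hcross] at hz
  have hqf : star v ⬝ᵥ Q *ᵥ v = 1 := quadform_eq_one hM Q hQ hdiag hsuper f
  rw [hqf] at hz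
  -- star u ⬝ᵥ u = ↑(∑ ‖u j‖²)
  have hnorm : star u ⬝ᵥ u = ((∑ j : Fin J, ‖u j‖ ^ 2 : ℝ) : ℂ) := by
    rw [dotProduct]
    push_cast
    refine Finset.sum_congr rfl fun j _ => ?_
    rw [Pi.star_apply, Complex.star_def, Complex.conj_mul']
  rw [hnorm] at hz
  rw [Complex.nonneg_iff] at hz
  have hle : (∑ j : Fin J, ‖u j‖ ^ 2) ≤ 1 := by
    have := hz.1
    simp only [Complex.add_re, Complex.neg_re, Complex.one_re, Complex.ofReal_re] at this
    linarith
  rw [Real.sqrt_le_one]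
  exact hle
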